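/- Let {z_n} be a sequence of positive reals satisfying a_n z_{n+1} = b_n z_n + c_n z_{n-1} for n ≥ 1 with a_n, b_n, c_n > 0, and λ_n = (b_n + √(b_n² + 4 a_n c_n))/(2 a_n). Suppose there exist positive numbers μ_n with μ_n ≤ λ_n for all n ≥ 1, z_1 ≤ μ_1 z_0, z_2 ≤ μ_2 z_1, and a_n μ_{n-1} μ_{n+1} ≥ b_n μ_{n-1} + c_n for all n ≥ 2. Then {z_n} is log-convex. -/

import Mathlib

theorem logConvex_three_term_recurrence_mu (a b c z lam mu : ℕ → ℝ)
    (hz : ∀ n, 0 < z n)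
    (ha : ∀ n, 0 < a (n + 1)) (hb : ∀ n, 0 < b (n + 1)) (hc : ∀ n, 0 < c (n + 1))
    (hrec : ∀ n : ℕ, a (n + 1) * z (n + 2) = b (n + 1) * z (n + 1) + c (n + 1) * z n)
    (hlam : ∀ n : ℕ, lam (n + 1) =
      (b (n + 1) + Real.sqrt ((b (n + 1)) ^ 2 + 4 * a (n + 1) * c (n + 1))) / (2 * a (n + 1)))
    (hmupos : ∀ n, 0 < mu (n + 1))
    (hmu : ∀ n : ℕ, mu (n + 1) ≤ lam (n + 1))
    (h1 : z 1 ≤ mu 1 * z 0) (h2 : z 2 ≤ mu 2 * z 1)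
    (hcond : ∀ n : ℕ,
      a (n + 2) * mu (n + 1) * mu (n + 3) ≥ b (n + 2) * mu (n + 1) + c (n + 2)) :
    ∀ n : ℕ, z n * z (n + 2) ≥ z (n + 1) ^ 2 := by
  have hlam_pos : ∀ n, 0 < lam (n + 1) := by
    intro n
    rw [hlam n]
    have hs : 0 ≤ Real.sqrt ((b (n + 1)) ^ 2 + 4 * a (n + 1) * c (n + 1)) := Real.sqrt_nonneg _
    have := hb n; have := ha n
    positivity
  have hlam_eq : ∀ n, a (n + 1) * lam (n + 1) ^ 2 = b (n + 1) * lam (n + 1) + c (n + 1) := by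
    intro n
    have hs : Real.sqrt ((b (n + 1)) ^ 2 + 4 * a (n + 1) * c (n + 1)) ^ 2
        = (b (n + 1)) ^ 2 + 4 * a (n + 1) * c (n + 1) := by
      apply Real.sq_sqrt
      have := ha n; have := hb n; have := hc n
      positivity
    have ha' := ha n
    rw [hlam n]
    field_simp
    rw [mul_comm 4 (a (n + 1))] at hs
    nlinarith [hs]
  -- key invariant
  have step : ∀ n, z (n + 1) ≤ mu (n + 1) * z n → z (n + 3) ≤ mu (n + 3) * z (n + 2) := by
    intro n h
    have h' : z (n + 1) ≤ lam (n + 1) * z n :=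
      h.trans (mul_le_mul_of_nonneg_right (hmu n) (hz n).le)
    have s1 : mu (n + 1) * z (n + 1) ≤ z (n + 2) := by
      have hr := hrec n
      have hl := hlam_eq n
      have hlp := hlam_pos n
      have hml := hmu n
      have hmp := hmupos n
      have A : a (n + 1) * lam (n + 1) * z (n + 2) ≥ a (n + 1) * lam (n + 1) * (lam (n + 1) * z (n + 1)) := by
        nlinarith [hc n, hz (n + 1), hz n]
      have B : z (n + 2) ≥ lam (n + 1) * z (n + 1) := by
        have hpos : 0 < a (n + 1) * lam (n + 1) := mul_pos (ha n) hlp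
        exact le_of_mul_le_mul_left A hpos
      nlinarith [hz (n + 1)]
    have hr2 := hrec (n + 1)
    have hc2 := hcond n
    have hmp := hmupos n
    have C : a (n + 2) * mu (n + 1) * z (n + 3) ≤ a (n + 2) * mu (n + 1) * (mu (n + 3) * z (n + 2)) := by
      nlinarith [hc (n + 1), hz (n + 1), hz (n + 2), hb (n + 1)]
    have hpos : 0 < a (n + 2) * mu (n + 1) := mul_pos (ha (n + 1)) hmp
    exact le_of_mul_le_mul_left C hpos
  have key : ∀ n, z (n + 1) ≤ mu (n + 1) * z n := by
    intro n
    induction n using Nat.twoStepInduction with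
    | zero => exact h1
    | one => exact h2
    | more m ih1 ih2 => exact step m ih1
  intro n
  have hk : z (n + 1) ≤ lam (n + 1) * z n :=
    (key n).trans (mul_le_mul_of_nonneg_right (hmu n) (hz n).le)
  have hr := hrec n
  have hl := hlam_eq n
  have hlp := hlam_pos n
  have T2 : a (n + 1) * lam (n + 1) ^ 2 * (z n * z (n + 1))
      = (b (n + 1) * lam (n + 1) + c (n + 1)) * (z n * z (n + 1)) := by rw [hl]
  have T4 : a (n + 1) * z (n + 2) * (lam (n + 1) * z n)
      = (b (n + 1) * z (n + 1) + c (n + 1) * z n) * (lam (n + 1) * z n) := by rw [hr]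
  have hint1 : c (n + 1) * z n * z (n + 1) ≤ c (n + 1) * z n * (lam (n + 1) * z n) :=
    mul_le_mul_of_nonneg_left hk (mul_nonneg (hc n).le (hz n).le)
  have hint2 : a (n + 1) * lam (n + 1) * z (n + 1) * z (n + 1)
      ≤ a (n + 1) * lam (n + 1) * z (n + 1) * (lam (n + 1) * z n) :=
    mul_le_mul_of_nonneg_left hk (mul_nonneg (mul_nonneg (ha n).le hlp.le) (hz (n + 1)).le)
  have A : a (n + 1) * lam (n + 1) * (z n * z (n + 2)) ≥ a (n + 1) * lam (n + 1) * z (n + 1) ^ 2 := by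
    nlinarith [T2, T4, hint1, hint2]
  have hpos : 0 < a (n + 1) * lam (n + 1) := mul_pos (ha n) hlp
  exact le_of_mul_le_mul_left A hpos
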